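/- Every thin cancellative monoid is quasi-atomic. -/

import Mathlib

open scoped Pointwise

variable {M : Type*} [Monoid M]

/-- `x` is a left divisor of `y`. -/
def LDvd (x y : M) : Prop := ∃ c, y = x * c

/-- `x` is a proper left divisor of `y`. -/
def PDvd (x y : M) : Prop := ∃ c, ¬ IsUnit c ∧ y = x * c

/-- `x ≃ y`: `y = x * u` for some unit `u`. -/
def AssocU (x y : M) : Prop := ∃ u : M, IsUnit u ∧ y = x * u

/-- The set of units of a monoid. -/
def UnitsSet (N : Type*) [Monoid N] : Set N := {u : N | IsUnit u}

/-- `S` spans `M` (Definition 2.2). -/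
def Spans (S : Set M) : Prop :=
  Submonoid.closure S = ⊤ ∧ (1 : M) ∈ S ∧
  (∀ x ∈ S, ∀ u : M, IsUnit u → x * u ∈ S) ∧
  ∀ x ∈ S, ∀ y ∈ S, ∀ z : M, LDvd x z → LDvd y z →
    ∃ x' ∈ S, ∃ y' ∈ S, x * y' = y * x' ∧ LDvd (x * y') z

/-- `S` quasi-spans `M`: `S M^*` spans `M`. -/
def QuasiSpans (S : Set M) : Prop := Spans (S * UnitsSet M)

/-- Condition (2.2). -/
def Cond22 (S : Set M) : Prop :=
  ∀ x ∈ S, ∀ y ∈ S, ∀ x'' y'' : M, x * y'' = y * x'' →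
    ∃ x' ∈ S, ∃ y' ∈ S, ∃ z : M, x * y' = y * x' ∧ x'' = x' * z ∧ y'' = y' * z

/-- `x` is an atom: not a unit, and in any factorization one factor is a unit. -/
def IsAtomM (x : M) : Prop := ¬ IsUnit x ∧ ∀ y z : M, x = y * z → IsUnit y ∨ IsUnit z

/-- `z` is a minimal common right multiple (mcm) of `x` and `y`. -/
def Mcm (x y z : M) : Prop :=
  LDvd x z ∧ LDvd y z ∧ ∀ z', PDvd z' z → ¬ (LDvd x z' ∧ LDvd y z')

/-- `x` is `S`-simple. -/
def SSimple (S : Set M) (x : M) : Prop :=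
  ∀ y, PDvd y x → {d : M | LDvd d y} ∩ S ≠ {d : M | LDvd d x} ∩ S

open Classical in
/-- number of nonunit letters in a list -/
noncomputable def nnW {M : Type*} [Monoid M] (L : List M) : ℕ :=
  (L.map (fun a => if IsUnit a then 0 else 1)).sum

open Classical

lemma nnW_nil : nnW ([] : List M) = 0 := rfl

lemma nnW_cons (a : M) (L : List M) :
    nnW (a :: L) = (if IsUnit a then 0 else 1) + nnW L := by
  simp [nnW]

lemma nnW_append (L1 L2 : List M) : nnW (L1 ++ L2) = nnW L1 + nnW L2 := by
  simp [nnW]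

lemma nnW_cons_unit {a : M} (ha : IsUnit a) (L : List M) : nnW (a :: L) = nnW L := by
  rw [nnW_cons, if_pos ha, zero_add]

lemma nnW_cons_nonunit {a : M} (ha : ¬ IsUnit a) (L : List M) : nnW (a :: L) = 1 + nnW L := by
  rw [nnW_cons, if_neg ha]

lemma nnW_zero_unit : ∀ L : List M, nnW L = 0 → ∀ a ∈ L, IsUnit a := by
  intro L
  induction L with
  | nil => intro _ a ha; simp at ha
  | cons b L ih =>
    intro h a ha
    rw [nnW_cons] at h
    by_cases hb : IsUnit b
    · rcases List.mem_cons.1 ha with rfl | ha'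
      · exact hb
      · exact ih (by omega) a ha'
    · rw [if_neg hb] at h; omega

lemma mul_eq_one_comm' (hl : ∀ a b c : M, a * b = a * c → b = c)
    {a b : M} (h : a * b = 1) : b * a = 1 := by
  apply hl a
  rw [← mul_assoc, h, one_mul, mul_one]

lemma isUnit_of_mul_one_left (hl : ∀ a b c : M, a * b = a * c → b = c)
    {a b : M} (h : a * b = 1) : IsUnit a :=
  ⟨⟨a, b, h, mul_eq_one_comm' hl h⟩, rfl⟩

lemma isUnit_of_mul_one_right (hl : ∀ a b c : M, a * b = a * c → b = c)
    {a b : M} (h : a * b = 1) : IsUnit b :=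
  ⟨⟨b, a, mul_eq_one_comm' hl h, h⟩, rfl⟩

lemma isUnit_mul_split (hl : ∀ a b c : M, a * b = a * c → b = c)
    {a b : M} (h : IsUnit (a * b)) : IsUnit a ∧ IsUnit b := by
  obtain ⟨u, hu⟩ := h
  constructor
  · apply isUnit_of_mul_one_left hl (b := b * (u⁻¹ : Mˣ))
    rw [← mul_assoc, ← hu, Units.mul_inv]
  · apply isUnit_of_mul_one_right hl (a := (u⁻¹ : Mˣ) * a)
    rw [mul_assoc, ← hu, Units.inv_mul]

lemma units_of_prod_unit (hl : ∀ a b c : M, a * b = a * c → b = c) :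
    ∀ L : List M, IsUnit L.prod → ∀ a ∈ L, IsUnit a := by
  intro L
  induction L with
  | nil => intro _ a ha; simp at ha
  | cons b L ih =>
    intro h a ha
    rw [List.prod_cons] at h
    rcases List.mem_cons.1 ha with rfl | ha'
    · exact (isUnit_mul_split hl h).1
    · exact ih (isUnit_mul_split hl h).2 a ha'

lemma pow_eq_one_of_finite (hl : ∀ a b c : M, a * b = a * c → b = c)
    (hU : {u : M | IsUnit u}.Finite) {W : M} (hW : IsUnit W) :
    ∃ k, 0 < k ∧ W ^ k = 1 := by
  have hnotinj : ¬ Function.Injective (fun k : ℕ => W ^ k) := by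
    intro hinj
    exact (Set.infinite_of_injective_forall_mem hinj (fun k => by exact hW.pow k)) hU
  rw [Function.not_injective_iff] at hnotinj
  obtain ⟨i, j, hij, hne⟩ := hnotinj
  rcases Nat.lt_or_gt_of_ne hne with h | h
  · refine ⟨j - i, by omega, ?_⟩
    apply hl (W ^ i)
    rw [← pow_add, Nat.add_sub_cancel' h.le, mul_one]
    exact hij.symm
  · refine ⟨i - j, by omega, ?_⟩
    apply hl (W ^ j)
    rw [← pow_add, Nat.add_sub_cancel' h.le, mul_one]
    exact hij

lemma no_bad (hl : ∀ a b c : M, a * b = a * c → b = c)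
    (hr : ∀ a b c : M, b * a = c * a → b = c)
    (hU : {u : M | IsUnit u}.Finite)
    {g T W : M} (hT : ¬ IsUnit T) (hW : IsUnit W) (h : g * W = T * g) : False := by
  have hk : ∀ k : ℕ, g * W ^ k = T ^ k * g := by
    intro k
    induction k with
    | zero => simp
    | succ k ih =>
      rw [pow_succ, ← mul_assoc, ih, mul_assoc, h, ← mul_assoc, pow_mul_comm', ← pow_succ']
  obtain ⟨k, hk0, hk1⟩ := pow_eq_one_of_finite hl hU hW
  have hg : T ^ k * g = 1 * g := by
    rw [one_mul, ← hk k, hk1, mul_one]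
  have hTk : T ^ k = 1 := hr g _ _ hg
  obtain ⟨k', rfl⟩ : ∃ k', k = k' + 1 := ⟨k - 1, by omega⟩
  rw [pow_succ'] at hTk
  exact hT (isUnit_of_mul_one_left hl hTk)

section Span

variable {S : Set M}

lemma units_mem_span (h1S : (1:M) ∈ S)
    (hSU : ∀ x ∈ S, ∀ u : M, IsUnit u → x * u ∈ S) {u : M} (hu : IsUnit u) : u ∈ S := by
  have := hSU 1 h1S u hu; rwa [one_mul] at this

lemma left_unit_mem_span (hl : ∀ a b c : M, a * b = a * c → b = c)
    (h1S : (1:M) ∈ S)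
    (hSU : ∀ x ∈ S, ∀ u : M, IsUnit u → x * u ∈ S)
    (hlcm : ∀ x ∈ S, ∀ y ∈ S, ∀ z : M, LDvd x z → LDvd y z →
      ∃ x' ∈ S, ∃ y' ∈ S, x * y' = y * x' ∧ LDvd (x * y') z)
    {u t : M} (hu : IsUnit u) (ht : t ∈ S) : u * t ∈ S := by
  obtain ⟨v, hv⟩ := hu.exists_right_inv
  have hvu : v * u = 1 := mul_eq_one_comm' hl hv
  have hvS : v ∈ S := units_mem_span h1S hSU (isUnit_of_mul_one_right hl hv)
  obtain ⟨x', hx'S, y', hy'S, heq, hdvd⟩ :=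
    hlcm t ht v hvS t ⟨1, (mul_one t).symm⟩ ⟨u * t, by rw [← mul_assoc, hvu, one_mul]⟩
  obtain ⟨c, hc⟩ := hdvd
  have hyc : y' * c = 1 := by
    apply hl t; rw [← mul_assoc, ← hc, mul_one]
  have hcu : IsUnit c := isUnit_of_mul_one_right hl hyc
  have hx : x' * c = u * t := by
    have hx' : x' = u * (t * y') := by
      rw [heq, ← mul_assoc, hv, one_mul]
    rw [hx', mul_assoc, mul_assoc, hyc, mul_one]
  rw [← hx]
  exact hSU x' hx'S c hcu

lemma nnW_cons_le (a : M) (L : List M) : nnW (a :: L) ≤ 1 + nnW L := by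
  rw [nnW_cons]; split <;> omega

lemma peel_lemma (hl : ∀ a b c : M, a * b = a * c → b = c)
    (hr : ∀ a b c : M, b * a = c * a → b = c)
    (hS : S.Finite) (h1S : (1:M) ∈ S)
    (hSU : ∀ x ∈ S, ∀ u : M, IsUnit u → x * u ∈ S)
    (hlcm : ∀ x ∈ S, ∀ y ∈ S, ∀ z : M, LDvd x z → LDvd y z →
      ∃ x' ∈ S, ∃ y' ∈ S, x * y' = y * x' ∧ LDvd (x * y') z) :
    ∀ (T : List M) (r u0 : M) (A : Finset M),
      (∀ a ∈ T, a ∈ S) → (∀ g ∈ A, g ∈ S) →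
      (∀ g ∈ A, ∃ Tm Wm : M, ¬ IsUnit Tm ∧ IsUnit Wm ∧ g * Wm = Tm * u0) →
      u0 ∈ S → LDvd u0 (T.prod * r) →
      ∃ (V : List M) (uf : M), (∀ a ∈ V, a ∈ S) ∧
        u0 * V.prod = T.prod * uf ∧ LDvd uf r ∧
        nnW T + A.card ≤ (hS.toFinset.card + 1) * nnW V + hS.toFinset.card := by
  have hUfin : {u : M | IsUnit u}.Finite :=
    hS.subset (fun u hu => units_mem_span h1S hSU hu)
  intro T
  induction T with
  | nil =>
    intro r u0 A _ hAS hA hu0 hdvd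
    have hAcard : A.card ≤ hS.toFinset.card :=
      Finset.card_le_card (fun g hg => hS.mem_toFinset.2 (hAS g hg))
    refine ⟨[], u0, by simp, by simp, ?_, ?_⟩
    · rwa [List.prod_nil, one_mul] at hdvd
    · simpa [nnW_nil] using hAcard
  | cons t T' ih =>
    intro r u0 A hTS hAS hA hu0 hdvd
    have hAcard : A.card ≤ hS.toFinset.card :=
      Finset.card_le_card (fun g hg => hS.mem_toFinset.2 (hAS g hg))
    have ht : t ∈ S := hTS t (List.mem_cons_self)
    have hT'S : ∀ a ∈ T', a ∈ S := fun a ha => hTS a (List.mem_cons_of_mem t ha)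
    rw [List.prod_cons, mul_assoc] at hdvd
    obtain ⟨x', hx'S, y', hy'S, heq, hldvd⟩ :=
      hlcm u0 hu0 t ht _ hdvd ⟨T'.prod * r, rfl⟩
    obtain ⟨d, hd⟩ := hldvd
    have hx'dvd : LDvd x' (T'.prod * r) := by
      refine ⟨d, hl t _ _ ?_⟩
      rw [hd, heq, mul_assoc]
    by_cases hy'u : IsUnit y'
    · have hA'hyp : ∀ g ∈ A, ∃ Tm Wm : M, ¬ IsUnit Tm ∧ IsUnit Wm ∧ g * Wm = Tm * x' := by
        intro g hg
        obtain ⟨Tm, Wm, h1, h2, h3⟩ := hA g hg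
        exact ⟨Tm * t, Wm * y', fun hTu => h1 (isUnit_mul_split hl hTu).1, h2.mul hy'u,
          by rw [← mul_assoc, h3, mul_assoc, heq, ← mul_assoc]⟩
      by_cases htu : IsUnit t
      · -- neutral step
        obtain ⟨V, uf, hVS, hVeq, hufr, hcount⟩ := ih r x' A hT'S hAS hA'hyp hx'S hx'dvd
        refine ⟨y' :: V, uf, ?_, ?_, hufr, ?_⟩
        · intro a ha
          rcases List.mem_cons.1 ha with rfl | ha'
          · exact hy'S
          · exact hVS a ha'
        · rw [List.prod_cons, List.prod_cons, ← mul_assoc, heq, mul_assoc, hVeq, ← mul_assoc]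
        · rw [nnW_cons_unit htu, nnW_cons_unit hy'u]
          exact hcount
      · -- shrink step
        have hnotin : u0 ∉ A := by
          intro hin
          obtain ⟨Tm, Wm, h1, h2, h3⟩ := hA u0 hin
          exact no_bad hl hr hUfin h1 h2 h3
        have hAS' : ∀ g ∈ insert u0 A, g ∈ S := by
          intro g hg
          rcases Finset.mem_insert.1 hg with rfl | hg'
          · exact hu0
          · exact hAS g hg'
        have hA'' : ∀ g ∈ insert u0 A, ∃ Tm Wm : M, ¬ IsUnit Tm ∧ IsUnit Wm ∧ g * Wm = Tm * x' := by
          intro g hg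
          rcases Finset.mem_insert.1 hg with rfl | hg'
          · exact ⟨t, y', htu, hy'u, heq⟩
          · exact hA'hyp g hg'
        obtain ⟨V, uf, hVS, hVeq, hufr, hcount⟩ := ih r x' (insert u0 A) hT'S hAS' hA'' hx'S hx'dvd
        refine ⟨y' :: V, uf, ?_, ?_, hufr, ?_⟩
        · intro a ha
          rcases List.mem_cons.1 ha with rfl | ha'
          · exact hy'S
          · exact hVS a ha'
        · rw [List.prod_cons, List.prod_cons, ← mul_assoc, heq, mul_assoc, hVeq, ← mul_assoc]
        · rw [nnW_cons_nonunit htu, nnW_cons_unit hy'u]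
          rw [Finset.card_insert_of_notMem hnotin] at hcount
          linarith [hcount]
    · -- reset step
      obtain ⟨V, uf, hVS, hVeq, hufr, hcount⟩ :=
        ih r x' ∅ hT'S (by simp) (by simp) hx'S hx'dvd
      refine ⟨y' :: V, uf, ?_, ?_, hufr, ?_⟩
      · intro a ha
        rcases List.mem_cons.1 ha with rfl | ha'
        · exact hy'S
        · exact hVS a ha'
      · rw [List.prod_cons, List.prod_cons, ← mul_assoc, heq, mul_assoc, hVeq, ← mul_assoc]
      · rw [nnW_cons_nonunit hy'u]
        have hexp : (hS.toFinset.card + 1) * (1 + nnW V)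
            = (hS.toFinset.card + 1) + (hS.toFinset.card + 1) * nnW V := by ring
        have hle := nnW_cons_le t T'
        rw [Finset.card_empty] at hcount
        rw [hexp]
        linarith [hcount, hAcard, hle]

end Span

lemma prod_isUnit : ∀ L : List M, (∀ a ∈ L, IsUnit a) → IsUnit L.prod := by
  intro L
  induction L with
  | nil => intro _; simpa using isUnit_one
  | cons a L ih =>
    intro h
    rw [List.prod_cons]
    exact (h a (List.mem_cons_self)).mul (ih (fun b hb => h b (List.mem_cons_of_mem a hb)))

lemma nnW_eq_zero : ∀ L : List M, (∀ a ∈ L, IsUnit a) → nnW L = 0 := by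
  intro L
  induction L with
  | nil => intro _; rfl
  | cons a L ih =>
    intro h
    rw [nnW_cons_unit (h a (List.mem_cons_self))]
    exact ih (fun b hb => h b (List.mem_cons_of_mem a hb))

section Span2

variable {S : Set M}

lemma normalize_word (hl : ∀ a b c : M, a * b = a * c → b = c)
    (h1S : (1:M) ∈ S)
    (hSU : ∀ x ∈ S, ∀ u : M, IsUnit u → x * u ∈ S)
    (hlcm : ∀ x ∈ S, ∀ y ∈ S, ∀ z : M, LDvd x z → LDvd y z →
      ∃ x' ∈ S, ∃ y' ∈ S, x * y' = y * x' ∧ LDvd (x * y') z) :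
    ∀ L : List M, (∀ a ∈ L, a ∈ S) → ¬ IsUnit L.prod →
      ∃ L' : List M, (∀ a ∈ L', a ∈ S) ∧ (∀ a ∈ L', ¬ IsUnit a) ∧
        L'.prod = L.prod ∧ L'.length ≤ nnW L := by
  intro L
  induction L with
  | nil =>
    intro _ h
    rw [List.prod_nil] at h
    exact absurd isUnit_one h
  | cons a L ih =>
    intro hS' hnu
    have haS : a ∈ S := hS' a (List.mem_cons_self)
    have hLS : ∀ b ∈ L, b ∈ S := fun b hb => hS' b (List.mem_cons_of_mem a hb)
    rw [List.prod_cons] at hnu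
    by_cases ha : IsUnit a
    · have hL : ¬ IsUnit L.prod := fun h => hnu (ha.mul h)
      obtain ⟨L', h1, h2, h3, h4⟩ := ih hLS hL
      match L', h1, h2, h3, h4 with
      | [], _, _, h3, _ =>
        exact absurd (h3 ▸ isUnit_one) hL
      | b :: R, h1, h2, h3, h4 =>
        have hbS : b ∈ S := h1 b (List.mem_cons_self)
        refine ⟨(a * b) :: R, ?_, ?_, ?_, ?_⟩
        · intro x hx
          rcases List.mem_cons.1 hx with rfl | hx'
          · exact left_unit_mem_span hl h1S hSU hlcm ha hbS
          · exact h1 x (List.mem_cons_of_mem b hx')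
        · intro x hx
          rcases List.mem_cons.1 hx with rfl | hx'
          · exact fun hu => (h2 b (List.mem_cons_self)) (isUnit_mul_split hl hu).2
          · exact h2 x (List.mem_cons_of_mem b hx')
        · rw [List.prod_cons, List.prod_cons, mul_assoc, ← List.prod_cons, h3]
        · rw [nnW_cons_unit ha]
          rw [List.length_cons] at h4 ⊢
          exact h4
    · by_cases hLp : IsUnit L.prod
      · refine ⟨[a * L.prod], ?_, ?_, ?_, ?_⟩
        · intro x hx
          rcases List.mem_cons.1 hx with rfl | hx'
          · exact hSU a haS _ hLp
          · simp at hx'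
        · intro x hx
          rcases List.mem_cons.1 hx with rfl | hx'
          · exact fun hu => ha (isUnit_mul_split hl hu).1
          · simp at hx'
        · rw [List.prod_singleton, List.prod_cons]
        · rw [nnW_cons_nonunit ha]; simp
      · obtain ⟨L', h1, h2, h3, h4⟩ := ih hLS hLp
        refine ⟨a :: L', ?_, ?_, ?_, ?_⟩
        · intro x hx
          rcases List.mem_cons.1 hx with rfl | hx'
          · exact haS
          · exact h1 x hx'
        · intro x hx
          rcases List.mem_cons.1 hx with rfl | hx'
          · exact ha
          · exact h2 x hx'
        · rw [List.prod_cons, List.prod_cons, h3]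
        · rw [nnW_cons_nonunit ha, List.length_cons]
          omega

lemma main_bound (hl : ∀ a b c : M, a * b = a * c → b = c)
    (hr : ∀ a b c : M, b * a = c * a → b = c)
    (hS : S.Finite) (h1S : (1:M) ∈ S)
    (hSU : ∀ x ∈ S, ∀ u : M, IsUnit u → x * u ∈ S)
    (hlcm : ∀ x ∈ S, ∀ y ∈ S, ∀ z : M, LDvd x z → LDvd y z →
      ∃ x' ∈ S, ∃ y' ∈ S, x * y' = y * x' ∧ LDvd (x * y') z) :
    ∀ (N : ℕ) (L T : List M), (∀ a ∈ L, a ∈ S) → (∀ a ∈ L, ¬ IsUnit a) →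
      (∀ a ∈ T, a ∈ S) → L.prod = T.prod → L.length ≤ N →
      nnW T + 1 ≤ (hS.toFinset.card + 1) ^ N := by
  intro N
  induction N with
  | zero =>
    intro L T _ _ _ hprod hlen
    have hLnil : L = [] := List.eq_nil_of_length_eq_zero (Nat.le_zero.1 hlen)
    have hTu : IsUnit T.prod := by
      rw [← hprod, hLnil, List.prod_nil]; exact isUnit_one
    have : nnW T = 0 := nnW_eq_zero T (units_of_prod_unit hl T hTu)
    rw [this, pow_zero]
    omega
  | succ N ihN =>
    intro L T hLS hLnu hTS hprod hlen
    match L, hLS, hLnu, hprod, hlen with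
    | [], _, _, hprod, _ =>
      have hTu : IsUnit T.prod := by
        rw [← hprod, List.prod_nil]; exact isUnit_one
      have h0 : nnW T = 0 := nnW_eq_zero T (units_of_prod_unit hl T hTu)
      rw [h0]
      exact Nat.one_le_pow _ _ (by omega)
    | s :: R, hLS, hLnu, hprod, hlen =>
      have hsS : s ∈ S := hLS s (List.mem_cons_self)
      have hdvd : LDvd s (T.prod * 1) :=
        ⟨R.prod, by rw [mul_one, ← hprod, List.prod_cons]⟩
      obtain ⟨V, uf, hVS, hVeq, hufdvd, hcount⟩ :=
        peel_lemma hl hr hS h1S hSU hlcm T 1 s ∅ hTS (by simp) (by simp) hsS hdvd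
      obtain ⟨c, hc⟩ := hufdvd
      have hufu : IsUnit uf := isUnit_of_mul_one_left hl hc.symm
      have hcu : IsUnit c := isUnit_of_mul_one_right hl hc.symm
      have hV : V.prod = R.prod * uf := by
        apply hl s
        rw [hVeq, ← hprod, List.prod_cons, mul_assoc]
      have hRV : (V ++ [c]).prod = R.prod := by
        rw [List.prod_append, List.prod_singleton, hV, mul_assoc, ← hc, mul_one]
      have hT' := ihN R (V ++ [c])
        (fun a ha => hLS a (List.mem_cons_of_mem s ha))
        (fun a ha => hLnu a (List.mem_cons_of_mem s ha))
        (by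
          intro a ha
          rcases List.mem_append.1 ha with ha' | ha'
          · exact hVS a ha'
          · rcases List.mem_singleton.1 ha' with rfl
            exact units_mem_span h1S hSU hcu)
        hRV.symm
        (by simpa using Nat.succ_le_succ_iff.1 (by simpa using hlen))
      rw [nnW_append] at hT'
      have hc0 : nnW [c] = 0 := nnW_eq_zero [c] (by
        intro x hx; rcases List.mem_singleton.1 hx with rfl; exact hcu)
      rw [hc0, add_zero] at hT'
      rw [Finset.card_empty, add_zero] at hcount
      calc nnW T + 1 ≤ (hS.toFinset.card + 1) * nnW V + hS.toFinset.card + 1 := by omega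
        _ = (hS.toFinset.card + 1) * (nnW V + 1) := by ring
        _ ≤ (hS.toFinset.card + 1) * (hS.toFinset.card + 1) ^ N :=
            Nat.mul_le_mul_left _ hT'
        _ = (hS.toFinset.card + 1) ^ (N + 1) := (pow_succ' _ _).symm

lemma expand_word (hl : ∀ a b c : M, a * b = a * c → b = c)
    (hgen : Submonoid.closure S = ⊤) :
    ∀ P : List M, (∀ a ∈ P, ¬ IsUnit a) →
      ∃ T : List M, (∀ a ∈ T, a ∈ S) ∧ T.prod = P.prod ∧ P.length ≤ nnW T := by
  intro P
  induction P with
  | nil => exact fun _ => ⟨[], by simp, by simp, by simp [nnW_nil]⟩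
  | cons a P ih =>
    intro hnu
    obtain ⟨T', hT'S, hT'p, hT'len⟩ := ih (fun b hb => hnu b (List.mem_cons_of_mem a hb))
    have haC : a ∈ Submonoid.closure S := by rw [hgen]; exact Submonoid.mem_top a
    obtain ⟨Ta, hTaS, hTap⟩ := Submonoid.exists_list_of_mem_closure haC
    have hTann : 1 ≤ nnW Ta := by
      by_contra h
      have h0 : nnW Ta = 0 := by omega
      have hall : IsUnit Ta.prod := prod_isUnit Ta (nnW_zero_unit Ta h0)
      exact (hnu a (List.mem_cons_self)) (hTap ▸ hall)
    exact ⟨Ta ++ T', by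
        intro x hx
        rcases List.mem_append.1 hx with hx' | hx'
        · exact hTaS x hx'
        · exact hT'S x hx', by
        rw [List.prod_append, hTap, hT'p, List.prod_cons], by
        rw [nnW_append, List.length_cons]
        omega⟩

end Span2

theorem stmt11'
    (hl : ∀ a b c : M, a * b = a * c → b = c)
    (hr : ∀ a b c : M, b * a = c * a → b = c)
    (hthin : ∃ S : Set M, S.Finite ∧ Submonoid.closure S = ⊤ ∧ (1 : M) ∈ S ∧
      (∀ x ∈ S, ∀ u : M, IsUnit u → x * u ∈ S) ∧
      ∀ x ∈ S, ∀ y ∈ S, ∀ z : M, LDvd x z → LDvd y z →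
        ∃ x' ∈ S, ∃ y' ∈ S, x * y' = y * x' ∧ LDvd (x * y') z) :
    ∃ l : M → ℕ, (∀ x : M, l x = 0 → IsUnit x) ∧
      ∀ x y : M, l x + l y ≤ l (x * y) := by
  classical
  obtain ⟨S, hS, hgen, h1S, hSU, hlcm⟩ := hthin
  set F : M → Set ℕ :=
    fun z => {n | ∃ P : List M, (∀ a ∈ P, ¬ IsUnit a) ∧ P.prod = z ∧ P.length = n} with hF
  have hbdd : ∀ z : M, BddAbove (F z) := by
    intro z
    by_cases hz : IsUnit z
    · refine ⟨0, ?_⟩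
      rintro n ⟨P, hPnu, hPp, rfl⟩
      match P, hPnu, hPp with
      | [], _, _ => simp
      | a :: Q, hPnu, hPp =>
        exact absurd (units_of_prod_unit hl (a :: Q) (by rw [hPp]; exact hz) a
          (List.mem_cons_self)) (hPnu a (List.mem_cons_self))
    · have hzC : z ∈ Submonoid.closure S := by rw [hgen]; exact Submonoid.mem_top z
      obtain ⟨Lz, hLzS, hLzp⟩ := Submonoid.exists_list_of_mem_closure hzC
      obtain ⟨L, hLS, hLnu, hLp, _⟩ :=
        normalize_word hl h1S hSU hlcm Lz hLzS (by rw [hLzp]; exact hz)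
      refine ⟨(hS.toFinset.card + 1) ^ L.length, ?_⟩
      rintro n ⟨P, hPnu, hPp, rfl⟩
      obtain ⟨T, hTS, hTp, hTlen⟩ := expand_word hl hgen P hPnu
      have hmb := main_bound hl hr hS h1S hSU hlcm L.length L T hLS hLnu hTS
        (by rw [hLp, hLzp, hTp, hPp]) le_rfl
      linarith [hmb, hTlen]
  have hFx_ne : ∀ z : M, ¬ IsUnit z → (F z).Nonempty := by
    intro z hz
    refine ⟨1, [z], ?_, List.prod_singleton, rfl⟩
    intro a ha
    rcases List.mem_singleton.1 ha with rfl
    exact hz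
  have hsup0 : ∀ z : M, IsUnit z → sSup (F z) = 0 := by
    intro z hz
    rcases Set.eq_empty_or_nonempty (F z) with he | hne
    · rw [he, csSup_empty, Nat.bot_eq_zero]
    · have hmem := Nat.sSup_mem hne (hbdd z)
      obtain ⟨P, hPnu, hPp, hPl⟩ := hmem
      match P, hPnu, hPp, hPl with
      | [], _, _, hPl => simpa using hPl.symm
      | a :: Q, hPnu, hPp, _ =>
        exact absurd (units_of_prod_unit hl (a :: Q) (by rw [hPp]; exact hz) a
          (List.mem_cons_self)) (hPnu a (List.mem_cons_self))
  refine ⟨fun z => sSup (F z), ?_, ?_⟩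
  · intro x hx
    change sSup (F x) = 0 at hx
    by_contra hxu
    have h1 : (1 : ℕ) ∈ F x := by
      refine ⟨[x], ?_, List.prod_singleton, rfl⟩
      intro a ha
      rcases List.mem_singleton.1 ha with rfl
      exact hxu
    have h2 := le_csSup (hbdd x) h1
    omega
  · intro x y
    change sSup (F x) + sSup (F y) ≤ sSup (F (x * y))
    by_cases hx : IsUnit x
    · rw [hsup0 x hx, zero_add]
      by_cases hy : IsUnit y
      · rw [hsup0 y hy, hsup0 (x * y) (hx.mul hy)]
      · have hmem := Nat.sSup_mem (hFx_ne y hy) (hbdd y)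
        obtain ⟨P, hPnu, hPp, hPl⟩ := hmem
        match P, hPnu, hPp, hPl with
        | [], _, hPp, _ =>
          exact absurd (by rw [← hPp, List.prod_nil]; exact isUnit_one) hy
        | b :: Q, hPnu, hPp, hPl =>
          apply le_csSup (hbdd (x * y))
          refine ⟨(x * b) :: Q, ?_, ?_, ?_⟩
          · intro a ha
            rcases List.mem_cons.1 ha with rfl | ha'
            · exact fun hu => (hPnu b (List.mem_cons_self)) (isUnit_mul_split hl hu).2
            · exact hPnu a (List.mem_cons_of_mem b ha')
          · rw [List.prod_cons, mul_assoc, ← List.prod_cons, hPp]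
          · rw [List.length_cons] at hPl ⊢
            exact hPl
    · by_cases hy : IsUnit y
      · rw [hsup0 y hy, add_zero]
        have hmem := Nat.sSup_mem (hFx_ne x hx) (hbdd x)
        obtain ⟨P, hPnu, hPp, hPl⟩ := hmem
        rcases List.eq_nil_or_concat P with rfl | ⟨Q, b, rfl⟩
        · exact absurd (by rw [← hPp, List.prod_nil]; exact isUnit_one) hx
        · rw [List.concat_eq_append] at hPnu hPp hPl
          apply le_csSup (hbdd (x * y))
          refine ⟨Q ++ [b * y], ?_, ?_, ?_⟩
          · intro a ha
            rcases List.mem_append.1 ha with ha' | ha'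
            · exact hPnu a (List.mem_append.2 (Or.inl ha'))
            · rcases List.mem_singleton.1 ha' with rfl
              exact fun hu => (hPnu b (List.mem_append.2 (Or.inr (List.mem_singleton.2 rfl))))
                (isUnit_mul_split hl hu).1
          · rw [List.prod_append, List.prod_singleton] at hPp ⊢
            rw [← mul_assoc, hPp]
          · rw [List.length_append] at hPl ⊢
            simpa using hPl
      · have hmx := Nat.sSup_mem (hFx_ne x hx) (hbdd x)
        have hmy := Nat.sSup_mem (hFx_ne y hy) (hbdd y)
        obtain ⟨Px, hPxnu, hPxp, hPxl⟩ := hmx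
        obtain ⟨Py, hPynu, hPyp, hPyl⟩ := hmy
        apply le_csSup (hbdd (x * y))
        refine ⟨Px ++ Py, ?_, ?_, ?_⟩
        · intro a ha
          rcases List.mem_append.1 ha with ha' | ha'
          · exact hPxnu a ha'
          · exact hPynu a ha'
        · rw [List.prod_append, hPxp, hPyp]
        · rw [List.length_append, hPxl, hPyl]

theorem stmt11
    (hl : ∀ a b c : M, a * b = a * c → b = c)
    (hr : ∀ a b c : M, b * a = c * a → b = c)
    (hthin : ∃ S : Set M, S.Finite ∧ Spans S) :
    ∃ l : M → ℕ, (∀ x : M, l x = 0 → IsUnit x) ∧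
      ∀ x y : M, l x + l y ≤ l (x * y) := by
  refine stmt11' hl hr ?_
  obtain ⟨S, hS, h⟩ := hthin
  exact ⟨S, hS, h.1, h.2.1, h.2.2.1, h.2.2.2⟩
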